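/- The optimal cost of the linear inverse problem and the gauge function satisfy (β(φ,x,ε,δ))^{1/p} = inf{ ‖y‖_φ : y ∈ B̄(x,ε) }; in particular both sides equal +∞ when x is not (φ,ε,δ)-feasible, and when x is (φ,ε,δ)-feasible the infimum is attained. -/

import Mathlib

open scoped ENNReal RealInnerProductSpace Pointwise
open Metric Set

noncomputable section

variable {H : Type*} [NormedAddCommGroup H] [InnerProductSpace ℝ H]

/-- Feasible pairs `(𝔠, f)` of the linear inverse problem `LIP(φ, x, ε, δ)`:
`(c f)^(1/p) ≤ 𝔠` and `‖x - φ f‖ ≤ ε + δ 𝔠`. -/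
def lipFeas (K : ℕ) (p : ℝ) (c : (Fin K → ℝ) → ℝ)
    (φ : (Fin K → ℝ) →ₗ[ℝ] H) (x : H) (ε δ : ℝ) : Set (ℝ × (Fin K → ℝ)) :=
  {cf | c cf.2 ^ (1 / p) ≤ cf.1 ∧ ‖x - φ cf.2‖ ≤ ε + δ * cf.1}

/-- The optimal value `β(φ,x,ε,δ) ∈ [0,∞]` of `LIP(φ,x,ε,δ)`, i.e. the infimum of `𝔠^p`
over feasible pairs `(𝔠,f)`; it equals `∞` if the problem is infeasible. -/
def lipVal (K : ℕ) (p : ℝ) (c : (Fin K → ℝ) → ℝ)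
    (φ : (Fin K → ℝ) →ₗ[ℝ] H) (x : H) (ε δ : ℝ) : ℝ≥0∞ :=
  sInf ((fun cf : ℝ × (Fin K → ℝ) => ENNReal.ofReal (cf.1 ^ p)) '' lipFeas K p c φ x ε δ)

/-- `E(φ,x,ε,δ)`: the set of `f`-components of optimal solutions of `LIP(φ,x,ε,δ)`. -/
def lipEnc (K : ℕ) (p : ℝ) (c : (Fin K → ℝ) → ℝ)
    (φ : (Fin K → ℝ) →ₗ[ℝ] H) (x : H) (ε δ : ℝ) : Set (Fin K → ℝ) :=
  {f | ∃ 𝔠 : ℝ, (𝔠, f) ∈ lipFeas K p c φ x ε δ ∧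
      ENNReal.ofReal (𝔠 ^ p) = lipVal K p c φ x ε δ}

/-- The set `S_δ(φ,1) = {z : ∃ f, c f ≤ 1 ∧ ‖z - φ f‖ ≤ δ}`. -/
def lipSet (K : ℕ) (c : (Fin K → ℝ) → ℝ)
    (φ : (Fin K → ℝ) →ₗ[ℝ] H) (δ : ℝ) : Set H :=
  {z | ∃ f, c f ≤ 1 ∧ ‖z - φ f‖ ≤ δ}

/-- The dual function `‖λ‖'_φ = sup {⟨λ,z⟩ : z ∈ S_δ(φ,1)}`. -/
def lipDual (K : ℕ) (c : (Fin K → ℝ) → ℝ)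
    (φ : (Fin K → ℝ) →ₗ[ℝ] H) (δ : ℝ) (l : H) : ℝ :=
  sSup ((fun z => ⟪l, z⟫) '' lipSet K c φ δ)

/-- The set `Λ_δ(φ,x,ε)` of optimal dual variables: `λ` with `‖λ‖'_φ = 1` and
`⟨λ,x⟩ - ε‖λ‖ = (β(φ,x,ε,δ))^(1/p)`. -/
def lipLambda (K : ℕ) (p : ℝ) (c : (Fin K → ℝ) → ℝ)
    (φ : (Fin K → ℝ) →ₗ[ℝ] H) (x : H) (ε δ : ℝ) : Set H :=
  {l | lipDual K c φ δ l = 1 ∧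
      ENNReal.ofReal (⟪l, x⟫ - ε * ‖l‖) = lipVal K p c φ x ε δ ^ (1 / p)}

/-- The gauge function `‖z‖_φ := min { r ≥ 0 : z ∈ r • S_δ(φ,1) } ∈ [0,∞]`
(`∞` if no such `r` exists). -/
def lipGauge (K : ℕ) (c : (Fin K → ℝ) → ℝ)
    (φ : (Fin K → ℝ) →ₗ[ℝ] H) (δ : ℝ) (z : H) : ℝ≥0∞ :=
  sInf {t : ℝ≥0∞ | ∃ r : ℝ, 0 ≤ r ∧ z ∈ r • lipSet K c φ δ ∧ t = ENNReal.ofReal r}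

section LipAux

variable {K : ℕ} {p : ℝ} {c : (Fin K → ℝ) → ℝ}

lemma lip_c_zero (hp : 0 < p)
    (hhom : ∀ (α : ℝ) (f : Fin K → ℝ), 0 ≤ α → c (α • f) = α ^ p * c f) :
    c 0 = 0 := by
  have h := hhom 0 0 le_rfl
  rwa [smul_zero, Real.zero_rpow hp.ne', zero_mul] at h

lemma lip_f_zero (hp : 0 < p)
    (hhom : ∀ (α : ℝ) (f : Fin K → ℝ), 0 ≤ α → c (α • f) = α ^ p * c f)
    (hcpt : IsCompact {f | c f ≤ 1}) {f : Fin K → ℝ} (hf : c f = 0) :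
    f = 0 := by
  by_contra hne
  obtain ⟨C, hC⟩ := hcpt.isBounded.exists_norm_le
  have hfpos : 0 < ‖f‖ := norm_pos_iff.2 hne
  set t : ℝ := (|C| + 1) / ‖f‖ with ht
  have ht0 : 0 ≤ t := by positivity
  have hmem : t • f ∈ {f | c f ≤ 1} := by
    simp only [Set.mem_setOf_eq, hhom t f ht0, hf, mul_zero]
    exact zero_le_one
  have h2 := hC _ hmem
  rw [norm_smul, Real.norm_of_nonneg ht0, ht, div_mul_cancel₀ _ hfpos.ne'] at h2
  nlinarith [abs_nonneg C, le_abs_self C]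

variable {φ : (Fin K → ℝ) →ₗ[ℝ] H} {x : H} {ε δ : ℝ}

lemma lip_feas_of_mem_smul (hp : 0 < p) (hc0 : ∀ f, 0 ≤ c f)
    (hhom : ∀ (α : ℝ) (f : Fin K → ℝ), 0 ≤ α → c (α • f) = α ^ p * c f)
    {y : H} {r : ℝ} (hr : 0 ≤ r) (hy : y ∈ Metric.closedBall x ε)
    (hmem : y ∈ r • lipSet K c φ δ) :
    ∃ f, (r, f) ∈ lipFeas K p c φ x ε δ := by
  rw [Set.mem_smul_set] at hmem
  obtain ⟨z, ⟨g, hg1, hg2⟩, rfl⟩ := hmem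
  refine ⟨r • g, ?_, ?_⟩
  · have h1 : c (r • g) ≤ r ^ p := by
      rw [hhom r g hr]
      calc r ^ p * c g ≤ r ^ p * 1 :=
            mul_le_mul_of_nonneg_left hg1 (Real.rpow_nonneg hr p)
        _ = r ^ p := mul_one _
    calc c (r • g) ^ (1 / p) ≤ (r ^ p) ^ (1 / p) :=
          Real.rpow_le_rpow (hc0 _) h1 (by positivity)
      _ = r := by rw [← Real.rpow_mul hr, mul_one_div_cancel hp.ne', Real.rpow_one]
  · have hxy : ‖x - r • z‖ ≤ ε := by
      rw [Metric.mem_closedBall, dist_eq_norm] at hy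
      rwa [norm_sub_rev]
    have htri : ‖x - φ (r • g)‖ ≤ ‖x - r • z‖ + ‖r • z - φ (r • g)‖ := by
      simpa [dist_eq_norm] using dist_triangle x (r • z) (φ (r • g))
    have h2 : ‖r • z - φ (r • g)‖ ≤ r * δ := by
      rw [map_smul, ← smul_sub, norm_smul, Real.norm_of_nonneg hr]
      exact mul_le_mul_of_nonneg_left hg2 hr
    calc ‖x - φ (r • g)‖ ≤ ε + r * δ := by linarith
      _ = ε + δ * r := by ring

lemma lip_mem_smul_of_feas (hp : 0 < p) (hc0 : ∀ f, 0 ≤ c f)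
    (hhom : ∀ (α : ℝ) (f : Fin K → ℝ), 0 ≤ α → c (α • f) = α ^ p * c f)
    (hcpt : IsCompact {f | c f ≤ 1}) (hε : 0 ≤ ε) (hδ : 0 ≤ δ)
    {𝔠 : ℝ} {f : Fin K → ℝ} (hfeas : (𝔠, f) ∈ lipFeas K p c φ x ε δ) :
    ∃ y ∈ Metric.closedBall x ε, y ∈ 𝔠 • lipSet K c φ δ := by
  obtain ⟨h1, h2⟩ := hfeas
  have h𝔠0 : 0 ≤ 𝔠 := le_trans (Real.rpow_nonneg (hc0 f) _) h1
  have hδ𝔠 : 0 ≤ δ * 𝔠 := mul_nonneg hδ h𝔠0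
  obtain ⟨y, hyx, hyf⟩ : ∃ y : H, ‖y - x‖ ≤ ε ∧ ‖y - φ f‖ ≤ δ * 𝔠 := by
    by_cases hn : ‖x - φ f‖ ≤ δ * 𝔠
    · exact ⟨x, by simpa using hε, hn⟩
    · push_neg at hn
      have hnpos : 0 < ‖x - φ f‖ := lt_of_le_of_lt hδ𝔠 hn
      set a : ℝ := δ * 𝔠 / ‖x - φ f‖ with ha
      have ha0 : 0 ≤ a := by positivity
      have ha1 : a < 1 := (div_lt_one hnpos).2 hn
      refine ⟨φ f + a • (x - φ f), ?_, ?_⟩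
      · have hrw : φ f + a • (x - φ f) - x = (a - 1) • (x - φ f) := by
          rw [sub_smul, one_smul]; abel
        rw [hrw, norm_smul, Real.norm_eq_abs, abs_of_nonpos (by linarith)]
        have han : a * ‖x - φ f‖ = δ * 𝔠 := by
          rw [ha, div_mul_cancel₀ _ hnpos.ne']
        nlinarith [h2]
      · have hrw : φ f + a • (x - φ f) - φ f = a • (x - φ f) := by abel
        rw [hrw, norm_smul, Real.norm_of_nonneg ha0, ha,
          div_mul_cancel₀ _ hnpos.ne']
  refine ⟨y, by rwa [Metric.mem_closedBall, dist_eq_norm], ?_⟩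
  rcases eq_or_lt_of_le h𝔠0 with h0 | hpos
  · have hcf : c f = 0 := by
      by_contra hne
      have hcfpos : 0 < c f := lt_of_le_of_ne (hc0 f) (Ne.symm hne)
      have := Real.rpow_pos_of_pos hcfpos (1 / p)
      rw [← h0] at h1
      linarith
    have hf0 : f = 0 := lip_f_zero hp hhom hcpt hcf
    have hy0 : y = 0 := by
      have hle : ‖y - φ f‖ ≤ 0 := by rw [← h0, mul_zero] at hyf; exact hyf
      have : y - φ f = 0 := norm_le_zero_iff.mp hle
      rw [sub_eq_zero] at this
      rw [this, hf0, map_zero]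
    rw [hy0, ← h0]
    refine Set.mem_smul_set.mpr ⟨0, ?_, smul_zero _⟩
    exact ⟨0, by rw [lip_c_zero hp hhom]; exact zero_le_one, by simpa using hδ⟩
  · refine Set.mem_smul_set.mpr ⟨𝔠⁻¹ • y, ⟨𝔠⁻¹ • f, ?_, ?_⟩, smul_inv_smul₀ hpos.ne' y⟩
    · have hcf : c f ≤ 𝔠 ^ p := by
        have h3 := Real.rpow_le_rpow (Real.rpow_nonneg (hc0 f) _) h1 hp.le
        rwa [← Real.rpow_mul (hc0 f), one_div_mul_cancel hp.ne', Real.rpow_one] at h3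
      rw [hhom _ _ (inv_nonneg.2 h𝔠0)]
      calc 𝔠⁻¹ ^ p * c f ≤ 𝔠⁻¹ ^ p * 𝔠 ^ p :=
            mul_le_mul_of_nonneg_left hcf (Real.rpow_nonneg (inv_nonneg.2 h𝔠0) _)
        _ = (𝔠⁻¹ * 𝔠) ^ p := (Real.mul_rpow (inv_nonneg.2 h𝔠0) h𝔠0).symm
        _ = 1 := by rw [inv_mul_cancel₀ hpos.ne', Real.one_rpow]
    · rw [map_smul, ← smul_sub, norm_smul, Real.norm_of_nonneg (inv_nonneg.2 h𝔠0)]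
      calc 𝔠⁻¹ * ‖y - φ f‖ ≤ 𝔠⁻¹ * (δ * 𝔠) :=
            mul_le_mul_of_nonneg_left hyf (inv_nonneg.2 h𝔠0)
        _ = δ := by field_simp

lemma lipVal_rpow_aux (hp : 0 < p) (hc0 : ∀ f, 0 ≤ c f) :
    lipVal K p c φ x ε δ ^ (1 / p)
      = sInf ((fun cf : ℝ × (Fin K → ℝ) => ENNReal.ofReal cf.1) '' lipFeas K p c φ x ε δ) := by
  have hip : (0:ℝ) < 1 / p := by positivity
  have key : ∀ s : Set ℝ≥0∞, sInf s ^ (1 / p) = sInf ((fun t => t ^ (1 / p)) '' s) := by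
    intro s
    have h := (ENNReal.orderIsoRpow (1 / p) hip).map_sInf s
    simp only [ENNReal.orderIsoRpow_apply] at h
    rw [sInf_image]
    exact h
  rw [lipVal, key, Set.image_image]
  apply congrArg
  apply Set.image_congr
  intro cf hcf
  have h𝔠 : 0 ≤ cf.1 := le_trans (Real.rpow_nonneg (hc0 cf.2) _) hcf.1
  rw [← ENNReal.ofReal_rpow_of_nonneg h𝔠 hp.le, ← ENNReal.rpow_mul,
    mul_one_div_cancel hp.ne', ENNReal.rpow_one]

end LipAux

/-- `(β(φ,x,ε,δ))^(1/p) = inf { ‖y‖_φ : y ∈ B̄(x,ε) }` (both sides being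
`∞` when `x` is not `(φ,ε,δ)`-feasible), and the infimum is attained when `x` is feasible. -/
theorem lipVal_rpow_eq_inf_gauge
    [FiniteDimensional ℝ H]
    (K : ℕ) (p : ℝ) (c : (Fin K → ℝ) → ℝ)
    (φ : (Fin K → ℝ) →ₗ[ℝ] H) (x : H) (ε δ : ℝ)
    (hp : 0 < p) (hc0 : ∀ f, 0 ≤ c f)
    (hhom : ∀ (α : ℝ) (f : Fin K → ℝ), 0 ≤ α → c (α • f) = α ^ p * c f)
    (hconv : Convex ℝ {f | c f ≤ 1}) (hcpt : IsCompact {f | c f ≤ 1})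
    (hε : 0 ≤ ε) (hδ : 0 ≤ δ) :
    lipVal K p c φ x ε δ ^ (1 / p) = sInf (lipGauge K c φ δ '' closedBall x ε) ∧
    (lipVal K p c φ x ε δ ≠ ⊤ → ∃ y ∈ closedBall x ε,
      lipGauge K c φ δ y = sInf (lipGauge K c φ δ '' closedBall x ε)) := by
  have hip : (0:ℝ) < 1 / p := by positivity
  have hA := lipVal_rpow_aux (φ := φ) (x := x) (ε := ε) (δ := δ) hp hc0
  have hmain : sInf ((fun cf : ℝ × (Fin K → ℝ) => ENNReal.ofReal cf.1) '' lipFeas K p c φ x ε δ)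
      = sInf (lipGauge K c φ δ '' closedBall x ε) := by
    apply le_antisymm
    · apply le_sInf
      rintro b ⟨y, hy, rfl⟩
      unfold lipGauge
      refine sInf_le_sInf ?_
      rintro t ⟨r, hr, hmem, rfl⟩
      obtain ⟨f, hf⟩ := lip_feas_of_mem_smul hp hc0 hhom hr hy hmem
      exact ⟨(r, f), hf, rfl⟩
    · apply le_sInf
      rintro t ⟨⟨𝔠, f⟩, hfeas, rfl⟩
      obtain ⟨y, hy, hmem⟩ := lip_mem_smul_of_feas hp hc0 hhom hcpt hε hδ hfeas
      have hgy : lipGauge K c φ δ y ≤ ENNReal.ofReal 𝔠 := by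
        unfold lipGauge
        exact sInf_le ⟨𝔠, le_trans (Real.rpow_nonneg (hc0 f) _) hfeas.1, hmem, rfl⟩
      exact le_trans (sInf_le ⟨y, hy, rfl⟩) hgy
  refine ⟨hA.trans hmain, ?_⟩
  intro htop
  set m := sInf (lipGauge K c φ δ '' closedBall x ε) with hm
  have hmne : m ≠ ⊤ := by
    rw [← hmain, ← hA]
    exact ENNReal.rpow_ne_top_of_nonneg hip.le htop
  have hmlt : m < ⊤ := lt_top_iff_ne_top.mpr hmne
  obtain ⟨b, ⟨y₀, hy₀, rfl⟩, hblt⟩ := sInf_lt_iff.mp hmlt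
  unfold lipGauge at hblt
  obtain ⟨t, ⟨r₀, hr₀, hmem₀, rfl⟩, -⟩ := sInf_lt_iff.mp hblt
  rw [Set.mem_smul_set] at hmem₀
  obtain ⟨s₀, hs₀, hy₀eq⟩ := hmem₀
  -- compactness of lipSet
  have hScpt : IsCompact (lipSet K c φ δ) := by
    have himg : lipSet K c φ δ
        = (fun q : (Fin K → ℝ) × H => φ q.1 + q.2) '' ({f | c f ≤ 1} ×ˢ closedBall 0 δ) := by
      ext z
      constructor
      · rintro ⟨f, hf1, hf2⟩
        refine ⟨(f, z - φ f), Set.mem_prod.mpr ⟨hf1, mem_closedBall_zero_iff.mpr hf2⟩, ?_⟩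
        dsimp only
        abel
      · rintro ⟨⟨f, w⟩, hfw, rfl⟩
        obtain ⟨hf, hw⟩ := Set.mem_prod.mp hfw
        rw [mem_closedBall_zero_iff] at hw
        exact ⟨f, hf, by simpa using hw⟩
    rw [himg]
    exact (hcpt.prod (isCompact_closedBall 0 δ)).image
      ((φ.continuous_of_finiteDimensional.comp continuous_fst).add continuous_snd)
  set S := lipSet K c φ δ with hS
  set D := (fun q : ℝ × H => (q.1, q.1 • q.2)) '' (Icc (0:ℝ) r₀ ×ˢ S) with hD
  have hDcpt : IsCompact D :=
    (isCompact_Icc.prod hScpt).image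
      (continuous_fst.prodMk (continuous_fst.smul continuous_snd))
  set C := D ∩ {q : ℝ × H | q.2 ∈ closedBall x ε} with hC
  have hCcpt : IsCompact C := hDcpt.inter_right (IsClosed.preimage continuous_snd Metric.isClosed_closedBall)
  have hCne : C.Nonempty := by
    refine ⟨(r₀, y₀), ⟨⟨(r₀, s₀), Set.mem_prod.mpr ⟨⟨hr₀, le_rfl⟩, hs₀⟩, ?_⟩, hy₀⟩⟩
    dsimp only
    rw [hy₀eq]
  obtain ⟨⟨rs, ys⟩, hqC, hmin⟩ := hCcpt.exists_isMinOn hCne continuous_fst.continuousOn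
  obtain ⟨hqD, hqball⟩ := hqC
  obtain ⟨⟨r', s'⟩, hps, heq⟩ := hqD
  obtain ⟨hr'I, hs'⟩ := Set.mem_prod.mp hps
  have h1 : r' = rs := congrArg Prod.fst heq
  have h2 : r' • s' = ys := congrArg Prod.snd heq
  subst h1
  subst h2
  have hrs0 : 0 ≤ r' := hr'I.1
  have hrsR : r' ≤ r₀ := hr'I.2
  have hgauge_le : lipGauge K c φ δ (r' • s') ≤ ENNReal.ofReal r' := by
    unfold lipGauge
    exact sInf_le ⟨r', hrs0, Set.mem_smul_set.mpr ⟨s', hs', rfl⟩, rfl⟩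
  have hm_le : m ≤ lipGauge K c φ δ (r' • s') := sInf_le ⟨r' • s', hqball, rfl⟩
  have hofreal_le : ENNReal.ofReal r' ≤ m := by
    by_contra hlt
    push_neg at hlt
    obtain ⟨b, ⟨y, hy, rfl⟩, hblt2⟩ := sInf_lt_iff.mp hlt
    unfold lipGauge at hblt2
    obtain ⟨t, ⟨r, hr, hmemr, rfl⟩, hrlt⟩ := sInf_lt_iff.mp hblt2
    have hrr' : r < r' := by
      by_contra hge
      push_neg at hge
      exact absurd (ENNReal.ofReal_le_ofReal hge) (not_le.mpr hrlt)
    rw [Set.mem_smul_set] at hmemr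
    obtain ⟨s, hsS, hseq⟩ := hmemr
    have hmemC : (r, y) ∈ C := by
      refine ⟨⟨(r, s), Set.mem_prod.mpr ⟨⟨hr, le_trans hrr'.le hrsR⟩, hsS⟩, ?_⟩, hy⟩
      dsimp only
      rw [hseq]
    have hle := isMinOn_iff.mp hmin (r, y) hmemC
    simp only at hle
    linarith
  exact ⟨r' • s', hqball, le_antisymm (le_trans hgauge_le hofreal_le) hm_le⟩
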